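/- arXiv:1610.05759 — 2 statements merged into one kernel-verified Lean document; each statement's English description precedes it below -/
import Mathlib

section
/- Let p be a prime, let k ∈ ℤ_p be nonzero, and assume S = ℤ_p[z]/(z² − k) is the maximal order in K = ℚ_p[z]/(z² − k), i.e., S is identified with the integral closure of ℤ_p in K. Let f be an integer-matrix binary cubic form with coefficients in ℤ_p and reduced discriminant 4k. Then the stabilizer of f in SL₂(ℚ_p) equals its stabilizer in SL₂(ℤ_p): every γ ∈ SL₂(ℚ_p) with γ·f = f has all entries in ℤ_p. -/
/-!
STATEMENT 9: Let p be a prime, k ∈ ℤ_p nonzero, and assume S = ℤ_p[z]/(z² − k) is the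
maximal order in K = ℚ_p[z]/(z² − k) (the natural map S → K identifies S with the
integral closure of ℤ_p in K).  If f is an integer-matrix binary cubic form with
ℤ_p-coefficients and reduced discriminant 4k, then the stabilizer of f in SL₂(ℚ_p)
equals its stabilizer in SL₂(ℤ_p): every γ ∈ SL₂(ℚ_p) fixing f has all entries in ℤ_p.
-/

open Matrix MatrixGroups

/-- An (integer-matrix) binary cubic form over `R`: the quadruple `(a,b,c,d)` stands for
`f(x,y) = a·x³ + 3b·x²y + 3c·xy² + d·y³`. -/
abbrev BCF (R : Type*) := R × R × R × R

/-- The reduced discriminant `disc(f) = a²d² − 3b²c² − 6abcd + 4ac³ + 4b³d` of the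
integer-matrix binary cubic form `(a,b,c,d)`. -/
def bcfDisc {R : Type*} [CommRing R] (f : BCF R) : R :=
  f.1 ^ 2 * f.2.2.2 ^ 2 - 3 * f.2.1 ^ 2 * f.2.2.1 ^ 2
    - 6 * f.1 * f.2.1 * f.2.2.1 * f.2.2.2 + 4 * f.1 * f.2.2.1 ^ 3 + 4 * f.2.1 ^ 3 * f.2.2.2

/-- The value `f(x,y)` of the integer-matrix binary cubic form `f = (a,b,c,d)`. -/
def bcfVal {R : Type*} [CommRing R] (f : BCF R) (x y : R) : R :=
  f.1 * x ^ 3 + 3 * f.2.1 * x ^ 2 * y + 3 * f.2.2.1 * x * y ^ 2 + f.2.2.2 * y ^ 3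

/-- The action of a 2×2 matrix `γ = ((p,q),(r,s))` on integer-matrix binary cubic forms
by linear change of variable, `(γ·f)(x,y) = f(px+qy, rx+sy)`, written in coordinates. -/
def bcfAct {R : Type*} [CommRing R] (γ : Matrix (Fin 2) (Fin 2) R) (f : BCF R) : BCF R :=
  (f.1 * γ 0 0 ^ 3 + 3 * f.2.1 * γ 0 0 ^ 2 * γ 1 0 + 3 * f.2.2.1 * γ 0 0 * γ 1 0 ^ 2
     + f.2.2.2 * γ 1 0 ^ 3,
   f.1 * γ 0 0 ^ 2 * γ 0 1 + f.2.1 * (γ 0 0 ^ 2 * γ 1 1 + 2 * γ 0 0 * γ 0 1 * γ 1 0)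
     + f.2.2.1 * (2 * γ 0 0 * γ 1 0 * γ 1 1 + γ 0 1 * γ 1 0 ^ 2) + f.2.2.2 * γ 1 0 ^ 2 * γ 1 1,
   f.1 * γ 0 0 * γ 0 1 ^ 2 + f.2.1 * (2 * γ 0 0 * γ 0 1 * γ 1 1 + γ 0 1 ^ 2 * γ 1 0)
     + f.2.2.1 * (γ 0 0 * γ 1 1 ^ 2 + 2 * γ 0 1 * γ 1 0 * γ 1 1) + f.2.2.2 * γ 1 0 * γ 1 1 ^ 2,
   f.1 * γ 0 1 ^ 3 + 3 * f.2.1 * γ 0 1 ^ 2 * γ 1 1 + 3 * f.2.2.1 * γ 0 1 * γ 1 1 ^ 2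
     + f.2.2.2 * γ 1 1 ^ 3)

/-- The action is by substitution: `(γ·f)(x,y) = f(px+qy, rx+sy)`. -/
theorem bcfAct_val {R : Type*} [CommRing R] (γ : Matrix (Fin 2) (Fin 2) R) (f : BCF R)
    (x y : R) : bcfVal (bcfAct γ f) x y
      = bcfVal f (γ 0 0 * x + γ 0 1 * y) (γ 1 0 * x + γ 1 1 * y) := by
  simp only [bcfAct, bcfVal]; ring

theorem bcfAct_one {R : Type*} [CommRing R] (f : BCF R) : bcfAct (1 : Matrix (Fin 2) (Fin 2) R) f = f := by
  obtain ⟨a, b, c, d⟩ := f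
  simp [bcfAct, Matrix.one_apply]

theorem bcfAct_mul {R : Type*} [CommRing R] (g h : Matrix (Fin 2) (Fin 2) R) (f : BCF R) :
    bcfAct (g * h) f = bcfAct h (bcfAct g f) := by
  obtain ⟨a, b, c, d⟩ := f
  simp only [bcfAct, Matrix.mul_apply, Fin.sum_univ_two, Prod.mk.injEq]
  refine ⟨by ring, by ring, by ring, by ring⟩



/-- Cubic covariant (Jacobian of the form and its Hessian). -/
def bcubGr {R : Type*} [CommRing R] (a b c d x y : R) : R :=
  (3*a*x^2+6*b*x*y+3*c*y^2) * ((b*c-a*d)*x+2*(c^2-b*d)*y)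
    - (3*b*x^2+6*c*x*y+3*d*y^2) * (2*(b^2-a*c)*x+(b*c-a*d)*y)

section Aux
variable {F : Type*} [Field F] [CharZero F]
set_option linter.unusedSectionVars false

theorem bcub_comm (a b c d p q r s : F)
    (ha : a * p ^ 3 + 3 * b * p ^ 2 * r + 3 * c * p * r ^ 2 + d * r ^ 3 = a)
    (hb : a * p ^ 2 * q + b * (p ^ 2 * s + 2 * p * q * r) + c * (2 * p * r * s + q * r ^ 2)
      + d * r ^ 2 * s = b)
    (hc : a * p * q ^ 2 + b * (2 * p * q * s + q ^ 2 * r) + c * (p * s ^ 2 + 2 * q * r * s)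
      + d * r * s ^ 2 = c)
    (hd : a * q ^ 3 + 3 * b * q ^ 2 * s + 3 * c * q * s ^ 2 + d * s ^ 3 = d)
    (hdet : p * s - q * r = 1) :
    ((b^2-a*c)*(p-s) + (b*c-a*d)*r = 0) ∧ ((b^2-a*c)*q + (c^2-b*d)*r = 0)
      ∧ ((b*c-a*d)*q - (c^2-b*d)*(p-s) = 0) := by
  have key1 : (a * p ^ 2 * q + b * (p ^ 2 * s + 2 * p * q * r) + c * (2 * p * r * s + q * r ^ 2)
      + d * r ^ 2 * s)^2 - (a * p ^ 3 + 3 * b * p ^ 2 * r + 3 * c * p * r ^ 2 + d * r ^ 3)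
      * (a * p * q ^ 2 + b * (2 * p * q * s + q ^ 2 * r) + c * (p * s ^ 2 + 2 * q * r * s)
      + d * r * s ^ 2)
      = (p * s - q * r)^2 * ((b^2-a*c)*p^2 + (b*c-a*d)*p*r + (c^2-b*d)*r^2) := by ring
  have key2 : (a * p ^ 2 * q + b * (p ^ 2 * s + 2 * p * q * r) + c * (2 * p * r * s + q * r ^ 2)
      + d * r ^ 2 * s) * (a * p * q ^ 2 + b * (2 * p * q * s + q ^ 2 * r)
      + c * (p * s ^ 2 + 2 * q * r * s) + d * r * s ^ 2)
      - (a * p ^ 3 + 3 * b * p ^ 2 * r + 3 * c * p * r ^ 2 + d * r ^ 3)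
      * (a * q ^ 3 + 3 * b * q ^ 2 * s + 3 * c * q * s ^ 2 + d * s ^ 3)
      = (p * s - q * r)^2 * (2*(b^2-a*c)*p*q + (b*c-a*d)*(p*s+q*r) + 2*(c^2-b*d)*r*s) := by ring
  have key3 : (a * p * q ^ 2 + b * (2 * p * q * s + q ^ 2 * r) + c * (p * s ^ 2 + 2 * q * r * s)
      + d * r * s ^ 2)^2 - (a * p ^ 2 * q + b * (p ^ 2 * s + 2 * p * q * r)
      + c * (2 * p * r * s + q * r ^ 2) + d * r ^ 2 * s)
      * (a * q ^ 3 + 3 * b * q ^ 2 * s + 3 * c * q * s ^ 2 + d * s ^ 3)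
      = (p * s - q * r)^2 * ((b^2-a*c)*q^2 + (b*c-a*d)*q*s + (c^2-b*d)*s^2) := by ring
  rw [ha, hb, hc, hdet] at key1
  rw [ha, hb, hc, hd, hdet] at key2
  rw [hb, hc, hd, hdet] at key3
  refine ⟨?_, ?_, ?_⟩
  · linear_combination (-s)*key1 + (r/2)*key2 - ((2*(b^2-a*c)*p+(b*c-a*d)*r)/2)*hdet
  · linear_combination (-(s/2))*key2 + r*key3 - ((2*(b^2-a*c)*q+(b*c-a*d)*s)/2)*hdet
  · linear_combination (q/2)*key2 - p*key3 - (((b*c-a*d)*q+2*(c^2-b*d)*s)/2)*hdet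

theorem bcub_finv (a b c d p q r s : F)
    (ha : a * p ^ 3 + 3 * b * p ^ 2 * r + 3 * c * p * r ^ 2 + d * r ^ 3 = a)
    (hb : a * p ^ 2 * q + b * (p ^ 2 * s + 2 * p * q * r) + c * (2 * p * r * s + q * r ^ 2)
      + d * r ^ 2 * s = b)
    (hc : a * p * q ^ 2 + b * (2 * p * q * s + q ^ 2 * r) + c * (p * s ^ 2 + 2 * q * r * s)
      + d * r * s ^ 2 = c)
    (hd : a * q ^ 3 + 3 * b * q ^ 2 * s + 3 * c * q * s ^ 2 + d * s ^ 3 = d)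
    (v1 v2 : F) :
    a*(p*v1+q*v2)^3 + 3*b*(p*v1+q*v2)^2*(r*v1+s*v2) + 3*c*(p*v1+q*v2)*(r*v1+s*v2)^2
      + d*(r*v1+s*v2)^3 = a*v1^3 + 3*b*v1^2*v2 + 3*c*v1*v2^2 + d*v2^3 := by
  linear_combination v1^3*ha + 3*v1^2*v2*hb + 3*v1*v2^2*hc + v2^3*hd

theorem bcub_Ginv (a b c d p q r s : F)
    (ha : a * p ^ 3 + 3 * b * p ^ 2 * r + 3 * c * p * r ^ 2 + d * r ^ 3 = a)
    (hb : a * p ^ 2 * q + b * (p ^ 2 * s + 2 * p * q * r) + c * (2 * p * r * s + q * r ^ 2)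
      + d * r ^ 2 * s = b)
    (hc : a * p * q ^ 2 + b * (2 * p * q * s + q ^ 2 * r) + c * (p * s ^ 2 + 2 * q * r * s)
      + d * r * s ^ 2 = c)
    (hd : a * q ^ 3 + 3 * b * q ^ 2 * s + 3 * c * q * s ^ 2 + d * s ^ 3 = d)
    (hdet : p * s - q * r = 1) (v1 v2 : F) :
    bcubGr a b c d (p*v1+q*v2) (r*v1+s*v2) = bcubGr a b c d v1 v2 := by
  have key : bcubGr (a * p ^ 3 + 3 * b * p ^ 2 * r + 3 * c * p * r ^ 2 + d * r ^ 3)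
      (a * p ^ 2 * q + b * (p ^ 2 * s + 2 * p * q * r) + c * (2 * p * r * s + q * r ^ 2)
        + d * r ^ 2 * s)
      (a * p * q ^ 2 + b * (2 * p * q * s + q ^ 2 * r) + c * (p * s ^ 2 + 2 * q * r * s)
        + d * r * s ^ 2)
      (a * q ^ 3 + 3 * b * q ^ 2 * s + 3 * c * q * s ^ 2 + d * s ^ 3) v1 v2
      = (p * s - q * r)^3 * bcubGr a b c d (p*v1+q*v2) (r*v1+s*v2) := by
    simp only [bcubGr]; ring
  rw [ha, hb, hc, hd, hdet] at key
  rw [key]; ring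

end Aux



section Aux2
variable {F : Type*} [Field F] [CharZero F]
set_option linter.unusedSectionVars false
set_option maxHeartbeats 1000000

theorem bcub_M1 (a b c d x y v1 v2 : F) :
    bcubGr a b c d ((x - y*(b*c-a*d)/2)*v1 - (c^2-b*d)*y*v2)
        ((b^2-a*c)*y*v1 + (x + y*(b*c-a*d)/2)*v2)
      = (x^3 + 3*(((b*c-a*d)^2 - 4*(b^2-a*c)*(c^2-b*d))/4)*x*y^2) * bcubGr a b c d v1 v2
        - (3*x^2*y + (((b*c-a*d)^2 - 4*(b^2-a*c)*(c^2-b*d))/4)*y^3)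
          * (((b*c-a*d)^2 - 4*(b^2-a*c)*(c^2-b*d))/4)
          * (6*(a*v1^3 + 3*b*v1^2*v2 + 3*c*v1*v2^2 + d*v2^3)) := by
  simp only [bcubGr]; ring

theorem bcub_M2 (a b c d x y v1 v2 : F) :
    6*(a*((x - y*(b*c-a*d)/2)*v1 - (c^2-b*d)*y*v2)^3
      + 3*b*((x - y*(b*c-a*d)/2)*v1 - (c^2-b*d)*y*v2)^2*((b^2-a*c)*y*v1 + (x + y*(b*c-a*d)/2)*v2)
      + 3*c*((x - y*(b*c-a*d)/2)*v1 - (c^2-b*d)*y*v2)*((b^2-a*c)*y*v1 + (x + y*(b*c-a*d)/2)*v2)^2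
      + d*((b^2-a*c)*y*v1 + (x + y*(b*c-a*d)/2)*v2)^3)
      = -(3*x^2*y + (((b*c-a*d)^2 - 4*(b^2-a*c)*(c^2-b*d))/4)*y^3) * bcubGr a b c d v1 v2
        + (x^3 + 3*(((b*c-a*d)^2 - 4*(b^2-a*c)*(c^2-b*d))/4)*x*y^2)
          * (6*(a*v1^3 + 3*b*v1^2*v2 + 3*c*v1*v2^2 + d*v2^3)) := by
  simp only [bcubGr]; ring

theorem bcub_syz (a b c d v1 v2 : F) :
    (bcubGr a b c d v1 v2)^2
      - (((b*c-a*d)^2 - 4*(b^2-a*c)*(c^2-b*d))/4)*(6*(a*v1^3 + 3*b*v1^2*v2 + 3*c*v1*v2^2 + d*v2^3))^2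
      = 36*((b^2-a*c)*v1^2 + (b*c-a*d)*v1*v2 + (c^2-b*d)*v2^2)^3 := by
  simp only [bcubGr]; ring

end Aux2

section Aux3
variable {F : Type*} [Field F] [CharZero F]
set_option maxHeartbeats 1000000

theorem bcub_UW (a b c d x y v1 v2 : F)
    (hfinv : a*((x - y*(b*c-a*d)/2)*v1 - (c^2-b*d)*y*v2)^3
      + 3*b*((x - y*(b*c-a*d)/2)*v1 - (c^2-b*d)*y*v2)^2*((b^2-a*c)*y*v1 + (x + y*(b*c-a*d)/2)*v2)
      + 3*c*((x - y*(b*c-a*d)/2)*v1 - (c^2-b*d)*y*v2)*((b^2-a*c)*y*v1 + (x + y*(b*c-a*d)/2)*v2)^2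
      + d*((b^2-a*c)*y*v1 + (x + y*(b*c-a*d)/2)*v2)^3 = a*v1^3 + 3*b*v1^2*v2 + 3*c*v1*v2^2 + d*v2^3)
    (hGinv : bcubGr a b c d ((x - y*(b*c-a*d)/2)*v1 - (c^2-b*d)*y*v2)
        ((b^2-a*c)*y*v1 + (x + y*(b*c-a*d)/2)*v2) = bcubGr a b c d v1 v2)
    (hQ : (b^2-a*c)*v1^2 + (b*c-a*d)*v1*v2 + (c^2-b*d)*v2^2 ≠ 0) :
    (x^3 + 3*(((b*c-a*d)^2 - 4*(b^2-a*c)*(c^2-b*d))/4)*x*y^2 = 1)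
      ∧ (3*x^2*y + (((b*c-a*d)^2 - 4*(b^2-a*c)*(c^2-b*d))/4)*y^3 = 0) := by
  have m1 := bcub_M1 a b c d x y v1 v2
  have m2 := bcub_M2 a b c d x y v1 v2
  rw [hGinv] at m1
  rw [hfinv] at m2
  have sz := bcub_syz a b c d v1 v2
  have hQ3 : (36:F)*((b^2-a*c)*v1^2 + (b*c-a*d)*v1*v2 + (c^2-b*d)*v2^2)^3 ≠ 0 :=
    mul_ne_zero (by norm_num) (pow_ne_zero _ hQ)
  have hU' : ((x^3 + 3*(((b*c-a*d)^2 - 4*(b^2-a*c)*(c^2-b*d))/4)*x*y^2) - 1)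
      * (36*((b^2-a*c)*v1^2 + (b*c-a*d)*v1*v2 + (c^2-b*d)*v2^2)^3) = 0 := by
    linear_combination (1 - (x^3 + 3*(((b*c-a*d)^2 - 4*(b^2-a*c)*(c^2-b*d))/4)*x*y^2))*sz
      - (bcubGr a b c d v1 v2)*m1
      + ((((b*c-a*d)^2 - 4*(b^2-a*c)*(c^2-b*d))/4)
          *(6*(a*v1^3 + 3*b*v1^2*v2 + 3*c*v1*v2^2 + d*v2^3)))*m2
  have hW' : (3*x^2*y + (((b*c-a*d)^2 - 4*(b^2-a*c)*(c^2-b*d))/4)*y^3)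
      * (36*((b^2-a*c)*v1^2 + (b*c-a*d)*v1*v2 + (c^2-b*d)*v2^2)^3) = 0 := by
    linear_combination (-(3*x^2*y + (((b*c-a*d)^2 - 4*(b^2-a*c)*(c^2-b*d))/4)*y^3))*sz
      + (bcubGr a b c d v1 v2)*m2
      - (6*(a*v1^3 + 3*b*v1^2*v2 + 3*c*v1*v2^2 + d*v2^3))*m1
  constructor
  · have := (mul_eq_zero.mp hU').resolve_right hQ3
    linear_combination this
  · exact (mul_eq_zero.mp hW').resolve_right hQ3

end Aux3

noncomputable section

open Polynomial

variable (p : ℕ) [Fact p.Prime] (k : ℤ_[p])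

/-- The order `S = ℤ_p[z]/(z² − k)`. -/
abbrev Sord := AdjoinRoot (Polynomial.X ^ 2 - Polynomial.C k : Polynomial ℤ_[p])

/-- The quadratic étale algebra `K = ℚ_p[z]/(z² − k)`. -/
abbrev Kalg := AdjoinRoot (Polynomial.X ^ 2 - Polynomial.C (k : ℚ_[p]) : Polynomial ℚ_[p])

/-- The natural map `S → K`, sending `z` to `z` and acting on constants via the
inclusion `ℤ_p → ℚ_p`. -/
def iota : Sord p k →+* Kalg p k :=
  AdjoinRoot.lift (algebraMap ℤ_[p] (Kalg p k)) (AdjoinRoot.root _) (by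
    have h := AdjoinRoot.eval₂_root (X ^ 2 - C (k : ℚ_[p]) : Polynomial ℚ_[p])
    simp only [eval₂_sub, eval₂_pow, eval₂_X, eval₂_C] at h ⊢
    rw [IsScalarTower.algebraMap_apply ℤ_[p] ℚ_[p], AdjoinRoot.algebraMap_eq]
    exact h)

/-- Coefficientwise inclusion of binary cubic forms over `ℤ_p` into forms over `ℚ_p`. -/
def mapC : BCF ℤ_[p] → BCF ℚ_[p] := fun f =>
  ((f.1 : ℚ_[p]), (f.2.1 : ℚ_[p]), (f.2.2.1 : ℚ_[p]), (f.2.2.2 : ℚ_[p]))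


theorem indep_aux (u v : ℚ_[p])
    (h : algebraMap ℚ_[p] (Kalg p k) u + algebraMap ℚ_[p] (Kalg p k) v
      * AdjoinRoot.root (X ^ 2 - C (k : ℚ_[p]) : Polynomial ℚ_[p]) = 0) :
    u = 0 ∧ v = 0 := by
  have hmk : AdjoinRoot.mk (X ^ 2 - C (k : ℚ_[p]) : Polynomial ℚ_[p]) (C v * X + C u) = 0 := by
    rw [_root_.map_add, _root_.map_mul, AdjoinRoot.mk_C, AdjoinRoot.mk_C, AdjoinRoot.mk_X,
      ← AdjoinRoot.algebraMap_eq]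
    linear_combination h
  have hdvd := (AdjoinRoot.mk_eq_zero).mp hmk
  have hdeg : (C v * X + C u).degree < (X ^ 2 - C (k : ℚ_[p]) : Polynomial ℚ_[p]).degree := by
    rw [degree_X_pow_sub_C (by norm_num) (k : ℚ_[p])]
    exact lt_of_le_of_lt (degree_linear_le) (by norm_num)
  have hz := Polynomial.eq_zero_of_dvd_of_degree_lt hdvd hdeg
  constructor
  · have := congrArg (fun t => Polynomial.coeff t 0) hz
    simpa using this
  · have := congrArg (fun t => Polynomial.coeff t 1) hz
    simpa using this

theorem root_sq : (AdjoinRoot.root (X ^ 2 - C (k : ℚ_[p]) : Polynomial ℚ_[p]))^2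
    = algebraMap ℚ_[p] (Kalg p k) (k : ℚ_[p]) := by
  have h := AdjoinRoot.eval₂_root (X ^ 2 - C (k : ℚ_[p]) : Polynomial ℚ_[p])
  simp only [eval₂_sub, eval₂_pow, eval₂_X, eval₂_C] at h
  rw [AdjoinRoot.algebraMap_eq]
  linear_combination h

set_option maxHeartbeats 1000000 in
theorem stabilizer_is_integral (hk : k ≠ 0)
    (hinj : Function.Injective (iota p k))
    (hmax : (iota p k).range = (integralClosure ℤ_[p] (Kalg p k)).toSubring)
    (f : BCF ℤ_[p]) (hf : bcfDisc f = 4 * k)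
    (γ : Matrix.SpecialLinearGroup (Fin 2) ℚ_[p])
    (hγ : bcfAct (γ : Matrix (Fin 2) (Fin 2) ℚ_[p]) (mapC p f) = mapC p f) :
    ∀ i j : Fin 2, ∃ a : ℤ_[p], (a : ℚ_[p]) = (γ : Matrix (Fin 2) (Fin 2) ℚ_[p]) i j := by
  obtain ⟨a, b, c, d⟩ := f
  set M := (γ : Matrix (Fin 2) (Fin 2) ℚ_[p]) with hM
  have hdet : M 0 0 * M 1 1 - M 0 1 * M 1 0 = 1 := by
    rw [← Matrix.det_fin_two, hM]
    exact γ.2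
  simp only [mapC, bcfAct, Prod.mk.injEq] at hγ
  obtain ⟨ha, hb, hc, hd⟩ := hγ
  obtain ⟨ht1, ht2, ht3⟩ := bcub_comm ((a : ℚ_[p])) ((b : ℚ_[p])) ((c : ℚ_[p])) ((d : ℚ_[p]))
    (M 0 0) (M 0 1) (M 1 0) (M 1 1) ha hb hc hd hdet
  have hκq : ((b : ℚ_[p])*(c : ℚ_[p])-(a : ℚ_[p])*(d : ℚ_[p]))^2
      - 4*((b : ℚ_[p])^2-(a : ℚ_[p])*(c : ℚ_[p]))*((c : ℚ_[p])^2-(b : ℚ_[p])*(d : ℚ_[p]))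
      = 4*((k : ℚ_[p])) := by
    have h := congrArg (algebraMap ℤ_[p] ℚ_[p]) hf
    simp only [bcfDisc, _root_.map_add, _root_.map_sub, _root_.map_mul, _root_.map_pow,
      map_ofNat, PadicInt.algebraMap_apply] at h
    linear_combination h
  have hκ0 : ((k : ℚ_[p])) ≠ 0 := fun h => hk (Subtype.ext h)
  obtain ⟨x, y, v1, v2, hp, hq, hr, hs, hQv⟩ : ∃ x y v1 v2 : ℚ_[p],
      M 0 0 = x - y*((b : ℚ_[p])*(c : ℚ_[p])-(a : ℚ_[p])*(d : ℚ_[p]))/2 ∧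
      M 0 1 = -(((c : ℚ_[p])^2-(b : ℚ_[p])*(d : ℚ_[p]))*y) ∧
      M 1 0 = ((b : ℚ_[p])^2-(a : ℚ_[p])*(c : ℚ_[p]))*y ∧
      M 1 1 = x + y*((b : ℚ_[p])*(c : ℚ_[p])-(a : ℚ_[p])*(d : ℚ_[p]))/2 ∧
      ((b : ℚ_[p])^2-(a : ℚ_[p])*(c : ℚ_[p]))*v1^2
        + ((b : ℚ_[p])*(c : ℚ_[p])-(a : ℚ_[p])*(d : ℚ_[p]))*v1*v2
        + ((c : ℚ_[p])^2-(b : ℚ_[p])*(d : ℚ_[p]))*v2^2 ≠ 0 := by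
    by_cases hA : ((b : ℚ_[p])^2-(a : ℚ_[p])*(c : ℚ_[p])) = 0
    · by_cases hC : ((c : ℚ_[p])^2-(b : ℚ_[p])*(d : ℚ_[p])) = 0
      · have hB : ((b : ℚ_[p])*(c : ℚ_[p])-(a : ℚ_[p])*(d : ℚ_[p])) ≠ 0 := by
          intro h
          apply hκ0
          have h4 : (4:ℚ_[p])*(k : ℚ_[p]) = 0 := by
            rw [← hκq, hA, hC, h]; ring
          have := mul_eq_zero.mp h4
          simpa using this
        have hiB : ((b : ℚ_[p])*(c : ℚ_[p])-(a : ℚ_[p])*(d : ℚ_[p]))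
            * ((b : ℚ_[p])*(c : ℚ_[p])-(a : ℚ_[p])*(d : ℚ_[p]))⁻¹ = 1 := mul_inv_cancel₀ hB
        refine ⟨(M 0 0 + M 1 1)/2,
          (M 1 1 - M 0 0) * ((b : ℚ_[p])*(c : ℚ_[p])-(a : ℚ_[p])*(d : ℚ_[p]))⁻¹, 1, 1,
          ?_, ?_, ?_, ?_, ?_⟩
        · linear_combination (-((M 0 0 - M 1 1)/2))*hiB
        · linear_combination (((b : ℚ_[p])*(c : ℚ_[p])-(a : ℚ_[p])*(d : ℚ_[p]))⁻¹)*ht3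
            - (M 0 1)*hiB
        · linear_combination (((b : ℚ_[p])*(c : ℚ_[p])-(a : ℚ_[p])*(d : ℚ_[p]))⁻¹)*ht1
            - (M 1 0)*hiB
        · linear_combination (-((M 1 1 - M 0 0)/2))*hiB
        · intro h
          apply hB
          linear_combination h - hA - hC
      · have hiC : ((c : ℚ_[p])^2-(b : ℚ_[p])*(d : ℚ_[p]))
            * ((c : ℚ_[p])^2-(b : ℚ_[p])*(d : ℚ_[p]))⁻¹ = 1 := mul_inv_cancel₀ hC
        refine ⟨(M 0 0 + M 1 1)/2,
          -(M 0 1) * ((c : ℚ_[p])^2-(b : ℚ_[p])*(d : ℚ_[p]))⁻¹, 0, 1, ?_, ?_, ?_, ?_, ?_⟩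
        · linear_combination (-(((c : ℚ_[p])^2-(b : ℚ_[p])*(d : ℚ_[p]))⁻¹/2))*ht3
            - ((M 0 0 - M 1 1)/2)*hiC
        · linear_combination (-(M 0 1))*hiC
        · linear_combination (((c : ℚ_[p])^2-(b : ℚ_[p])*(d : ℚ_[p]))⁻¹)*ht2 - (M 1 0)*hiC
        · linear_combination (((c : ℚ_[p])^2-(b : ℚ_[p])*(d : ℚ_[p]))⁻¹/2)*ht3
            - ((M 1 1 - M 0 0)/2)*hiC
        · intro h
          apply hC
          linear_combination h
    · have hiA : ((b : ℚ_[p])^2-(a : ℚ_[p])*(c : ℚ_[p]))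
          * ((b : ℚ_[p])^2-(a : ℚ_[p])*(c : ℚ_[p]))⁻¹ = 1 := mul_inv_cancel₀ hA
      refine ⟨(M 0 0 + M 1 1)/2,
        M 1 0 * ((b : ℚ_[p])^2-(a : ℚ_[p])*(c : ℚ_[p]))⁻¹, 1, 0, ?_, ?_, ?_, ?_, ?_⟩
      · linear_combination (((b : ℚ_[p])^2-(a : ℚ_[p])*(c : ℚ_[p]))⁻¹/2)*ht1
          - ((M 0 0 - M 1 1)/2)*hiA
      · linear_combination (((b : ℚ_[p])^2-(a : ℚ_[p])*(c : ℚ_[p]))⁻¹)*ht2 - (M 0 1)*hiA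
      · linear_combination (-(M 1 0))*hiA
      · linear_combination (-(((b : ℚ_[p])^2-(a : ℚ_[p])*(c : ℚ_[p]))⁻¹/2))*ht1
          - ((M 1 1 - M 0 0)/2)*hiA
      · intro h
        apply hA
        linear_combination h
  have hGi := bcub_Ginv ((a : ℚ_[p])) ((b : ℚ_[p])) ((c : ℚ_[p])) ((d : ℚ_[p]))
    (M 0 0) (M 0 1) (M 1 0) (M 1 1) ha hb hc hd hdet v1 v2
  have hfi := bcub_finv ((a : ℚ_[p])) ((b : ℚ_[p])) ((c : ℚ_[p])) ((d : ℚ_[p]))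
    (M 0 0) (M 0 1) (M 1 0) (M 1 1) ha hb hc hd v1 v2
  have hw1 : M 0 0*v1 + M 0 1*v2
      = (x - y*((b : ℚ_[p])*(c : ℚ_[p])-(a : ℚ_[p])*(d : ℚ_[p]))/2)*v1
        - ((c : ℚ_[p])^2-(b : ℚ_[p])*(d : ℚ_[p]))*y*v2 := by
    rw [hp, hq]; try ring
  have hw2 : M 1 0*v1 + M 1 1*v2
      = ((b : ℚ_[p])^2-(a : ℚ_[p])*(c : ℚ_[p]))*y*v1
        + (x + y*((b : ℚ_[p])*(c : ℚ_[p])-(a : ℚ_[p])*(d : ℚ_[p]))/2)*v2 := by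
    rw [hr, hs]; try ring
  rw [hw1, hw2] at hGi hfi
  obtain ⟨hU, hW⟩ := bcub_UW ((a : ℚ_[p])) ((b : ℚ_[p])) ((c : ℚ_[p])) ((d : ℚ_[p]))
    x y v1 v2 hfi hGi hQv
  have hU2 : x^3 + 3*((k : ℚ_[p]))*x*y^2 = 1 := by
    linear_combination hU - (3*x*y^2/4)*hκq
  have hW2 : 3*x^2*y + ((k : ℚ_[p]))*y^3 = 0 := by
    linear_combination hW - (y^3/4)*hκq
  -- pass to K = Kalg p k
  have hz := root_sq p k
  set ε : Kalg p k := algebraMap ℚ_[p] (Kalg p k) x - algebraMap ℚ_[p] (Kalg p k) y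
    * AdjoinRoot.root (X ^ 2 - C (k : ℚ_[p]) : Polynomial ℚ_[p]) with hε
  have hε3 : ε^3 = 1 := by
    have hU3 := congrArg (algebraMap ℚ_[p] (Kalg p k)) hU2
    have hW3 := congrArg (algebraMap ℚ_[p] (Kalg p k)) hW2
    simp only [_root_.map_add, _root_.map_mul, _root_.map_pow, _root_.map_one,
      _root_.map_zero, map_ofNat] at hU3 hW3
    rw [hε]
    linear_combination hU3
      - (AdjoinRoot.root (X ^ 2 - C (k : ℚ_[p]) : Polynomial ℚ_[p]))*hW3
      + (3*(algebraMap ℚ_[p] (Kalg p k) x)*(algebraMap ℚ_[p] (Kalg p k) y)^2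
        - (algebraMap ℚ_[p] (Kalg p k) y)^3
          *(AdjoinRoot.root (X ^ 2 - C (k : ℚ_[p]) : Polynomial ℚ_[p])))*hz
  have hεint : IsIntegral ℤ_[p] ε := by
    refine ⟨X^3 - C 1, Polynomial.monic_X_pow_sub_C 1 (by norm_num), ?_⟩
    simp only [eval₂_sub, eval₂_pow, eval₂_X, eval₂_C, _root_.map_one]
    rw [hε3]
    simp
  have hεrange : ε ∈ (iota p k).range := by
    rw [hmax]
    exact Subalgebra.mem_toSubring.mpr hεint
  obtain ⟨t, hs'⟩ := hεrange
  obtain ⟨g, rfl⟩ := AdjoinRoot.mk_surjective t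
  have hmon : (X ^ 2 - C k : Polynomial ℤ_[p]).Monic :=
    Polynomial.monic_X_pow_sub_C k (by norm_num)
  have hdeg1 : (g %ₘ (X ^ 2 - C k : Polynomial ℤ_[p])).degree ≤ 1 := by
    have h2 := Polynomial.degree_modByMonic_lt g hmon
    rw [Polynomial.degree_X_pow_sub_C (by norm_num) k] at h2
    exact Order.le_of_lt_succ (by exact_mod_cast h2)
  have hrep : g %ₘ (X ^ 2 - C k : Polynomial ℤ_[p])
      = C ((g %ₘ (X ^ 2 - C k : Polynomial ℤ_[p])).coeff 1) * X
        + C ((g %ₘ (X ^ 2 - C k : Polynomial ℤ_[p])).coeff 0) :=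
    Polynomial.eq_X_add_C_of_degree_le_one hdeg1
  have hmk : AdjoinRoot.mk (X ^ 2 - Polynomial.C k : Polynomial ℤ_[p]) g
      = AdjoinRoot.mk (X ^ 2 - Polynomial.C k : Polynomial ℤ_[p])
        (g %ₘ (X ^ 2 - C k : Polynomial ℤ_[p])) := by
    conv_lhs => rw [← Polynomial.modByMonic_add_div g (X ^ 2 - C k : Polynomial ℤ_[p])]
    rw [_root_.map_add, _root_.map_mul, AdjoinRoot.mk_self, zero_mul, add_zero]
  have key : iota p k (AdjoinRoot.mk (X ^ 2 - Polynomial.C k : Polynomial ℤ_[p]) g)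
      = algebraMap ℚ_[p] (Kalg p k)
          (((g %ₘ (X ^ 2 - C k : Polynomial ℤ_[p])).coeff 0 : ℚ_[p]))
        + algebraMap ℚ_[p] (Kalg p k)
          (((g %ₘ (X ^ 2 - C k : Polynomial ℤ_[p])).coeff 1 : ℚ_[p]))
          * AdjoinRoot.root (X ^ 2 - C (k : ℚ_[p]) : Polynomial ℚ_[p]) := by
    rw [hmk]
    conv_lhs => rw [hrep]
    simp only [iota, AdjoinRoot.lift_mk, eval₂_add, eval₂_mul, eval₂_C, eval₂_X]
    rw [IsScalarTower.algebraMap_apply ℤ_[p] ℚ_[p] (Kalg p k)]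
    rw [IsScalarTower.algebraMap_apply ℤ_[p] ℚ_[p] (Kalg p k)]
    simp only [PadicInt.algebraMap_apply]
    ring
  have heq : algebraMap ℚ_[p] (Kalg p k)
        ((((g %ₘ (X ^ 2 - C k : Polynomial ℤ_[p])).coeff 0 : ℚ_[p])) - x)
      + algebraMap ℚ_[p] (Kalg p k)
        ((((g %ₘ (X ^ 2 - C k : Polynomial ℤ_[p])).coeff 1 : ℚ_[p])) + y)
        * AdjoinRoot.root (X ^ 2 - C (k : ℚ_[p]) : Polynomial ℚ_[p]) = 0 := by
    rw [map_sub, map_add]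
    linear_combination (-1 : Kalg p k)*key + hs' + hε
  obtain ⟨h0, h1⟩ := indep_aux p k _ _ heq
  have hx : x = (((g %ₘ (X ^ 2 - C k : Polynomial ℤ_[p])).coeff 0 : ℚ_[p])) := by
    linear_combination -h0
  have hy : y = -(((g %ₘ (X ^ 2 - C k : Polynomial ℤ_[p])).coeff 1 : ℚ_[p])) := by
    linear_combination h1
  -- B/2 is integral
  have ht2' : (((b*c-a*d : ℤ_[p]) : ℚ_[p])/2)^2
      = ((k + (b^2-a*c)*(c^2-b*d) : ℤ_[p]) : ℚ_[p]) := by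
    push_cast
    linear_combination hκq/4
  have hβn : ‖((b*c-a*d : ℤ_[p]) : ℚ_[p])/2‖ ≤ 1 := by
    have h1' : ‖(((b*c-a*d : ℤ_[p]) : ℚ_[p])/2)^2‖ ≤ 1 := by
      rw [ht2']
      exact (k + (b^2-a*c)*(c^2-b*d)).2
    rw [norm_pow] at h1'
    nlinarith [norm_nonneg (((b*c-a*d : ℤ_[p]) : ℚ_[p])/2)]
  set β : ℤ_[p] := ⟨((b*c-a*d : ℤ_[p]) : ℚ_[p])/2, hβn⟩ with hβ
  have hβc : (β : ℚ_[p]) = ((b*c-a*d : ℤ_[p]) : ℚ_[p])/2 := rfl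
  set m0 : ℤ_[p] := (g %ₘ (X ^ 2 - C k : Polynomial ℤ_[p])).coeff 0 with hm0
  set m1 : ℤ_[p] := (g %ₘ (X ^ 2 - C k : Polynomial ℤ_[p])).coeff 1 with hm1
  intro i j
  fin_cases i <;> fin_cases j
  · show ∃ t : ℤ_[p], (t : ℚ_[p]) = M 0 0
    refine ⟨m0 + m1*β, ?_⟩
    rw [hp, hx, hy]
    push_cast [hβc]
    ring
  · show ∃ t : ℤ_[p], (t : ℚ_[p]) = M 0 1
    refine ⟨m1*(c^2-b*d), ?_⟩
    rw [hq, hy]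
    push_cast
    ring
  · show ∃ t : ℤ_[p], (t : ℚ_[p]) = M 1 0
    refine ⟨-(m1*(b^2-a*c)), ?_⟩
    rw [hr, hy]
    push_cast
    ring
  · show ∃ t : ℤ_[p], (t : ℚ_[p]) = M 1 1
    refine ⟨m0 - m1*β, ?_⟩
    rw [hs, hx, hy]
    push_cast [hβc]
    ring


end
end

section
/- Let D be a nonzero real number. Then SL₂(ℝ) acts transitively on the set of integer-matrix binary cubic forms over ℝ with reduced discriminant D: for any two quadruples (a,b,c,d), (a′,b′,c′,d′) ∈ ℝ⁴ whose associated forms both have reduced discriminant D, there exists γ ∈ SL₂(ℝ) with γ·f = f′. In other words, for every nonzero k ∈ ℝ there is exactly one SL₂(ℝ)-orbit of binary cubic forms of discriminant 4k over ℝ. -/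
/-!
STATEMENT 14: For any nonzero real number D, the group SL₂(ℝ) acts transitively on the
set of integer-matrix binary cubic forms over ℝ with reduced discriminant D: there is
exactly one SL₂(ℝ)-orbit of binary cubic forms of each nonzero discriminant over ℝ.
-/

open Matrix MatrixGroups

/-- Auxiliary: discriminant is invariant under unimodular substitution. -/
theorem bcfDisc_act' {R : Type*} [CommRing R] (γ : Matrix (Fin 2) (Fin 2) R) (f : BCF R)
    (h : γ 0 0 * γ 1 1 - γ 0 1 * γ 1 0 = 1) : bcfDisc (bcfAct γ f) = bcfDisc f := by
  obtain ⟨a, b, c, d⟩ := f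
  set p := γ 0 0; set q := γ 0 1; set r := γ 1 0; set s := γ 1 1
  simp only [bcfDisc, bcfAct]
  linear_combination (((p*s-q*r)^5 + (p*s-q*r)^4 + (p*s-q*r)^3 + (p*s-q*r)^2 + (p*s-q*r) + 1) *
    (a ^ 2 * d ^ 2 - 3 * b ^ 2 * c ^ 2 - 6 * a * b * c * d + 4 * a * c ^ 3 + 4 * b ^ 3 * d)) * h

/-- Auxiliary: real monic cubics have a root. -/
theorem cubic_root' (B C E : ℝ) : ∃ t : ℝ, t ^ 3 + B * t ^ 2 + C * t + E = 0 := by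
  obtain ⟨bB, hB0, hBl, hBu⟩ : ∃ x : ℝ, 0 ≤ x ∧ -x ≤ B ∧ B ≤ x :=
    ⟨|B|, abs_nonneg B, neg_abs_le B, le_abs_self B⟩
  obtain ⟨bC, hC0, hCl, hCu⟩ : ∃ x : ℝ, 0 ≤ x ∧ -x ≤ C ∧ C ≤ x :=
    ⟨|C|, abs_nonneg C, neg_abs_le C, le_abs_self C⟩
  obtain ⟨bE, hE0, hEl, hEu⟩ : ∃ x : ℝ, 0 ≤ x ∧ -x ≤ E ∧ E ≤ x :=
    ⟨|E|, abs_nonneg E, neg_abs_le E, le_abs_self E⟩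
  set g : ℝ → ℝ := fun t => t ^ 3 + B * t ^ 2 + C * t + E with hg
  set M : ℝ := 1 + bB + bC + bE with hM
  have hM1 : 1 ≤ M := by linarith
  have hMpos : 0 < M := by linarith
  have hcont : Continuous g := by fun_prop
  have h1 : g (-M) ≤ 0 := by
    show (-M) ^ 3 + B * (-M) ^ 2 + C * (-M) + E ≤ 0
    nlinarith [mul_le_mul_of_nonneg_right hBu (sq_nonneg M),
      mul_le_mul_of_nonneg_right hCu hMpos.le, sq_nonneg M,
      mul_le_mul_of_nonneg_right (mul_le_mul_of_nonneg_right hCu hMpos.le) hMpos.le,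
      mul_le_mul_of_nonneg_right hEu hMpos.le,
      mul_le_mul_of_nonneg_right (mul_le_mul_of_nonneg_right hEu hMpos.le) hMpos.le]
  have h2 : 0 ≤ g M := by
    show 0 ≤ M ^ 3 + B * M ^ 2 + C * M + E
    nlinarith [mul_le_mul_of_nonneg_right hBl (sq_nonneg M),
      mul_le_mul_of_nonneg_right (mul_le_mul_of_nonneg_right hCl hMpos.le) hMpos.le,
      mul_le_mul_of_nonneg_right (mul_le_mul_of_nonneg_right hEl hMpos.le) hMpos.le]
  obtain ⟨t, _, ht⟩ := intermediate_value_Icc (by linarith : (-M) ≤ M) hcont.continuousOn ⟨h1, h2⟩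
  exact ⟨t, ht⟩

/-- Auxiliary: build an element of SL(2,ℝ) from four entries. -/
def sl2' (p q r s : ℝ) (h : p * s - q * r = 1) : Matrix.SpecialLinearGroup (Fin 2) ℝ :=
  ⟨!![p, q; r, s], by simp [Matrix.det_fin_two_of, h]⟩

theorem sl2'_00 (p q r s : ℝ) (h) : (sl2' p q r s h : Matrix (Fin 2) (Fin 2) ℝ) 0 0 = p := rfl
theorem sl2'_01 (p q r s : ℝ) (h) : (sl2' p q r s h : Matrix (Fin 2) (Fin 2) ℝ) 0 1 = q := rfl
theorem sl2'_10 (p q r s : ℝ) (h) : (sl2' p q r s h : Matrix (Fin 2) (Fin 2) ℝ) 1 0 = r := rfl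
theorem sl2'_11 (p q r s : ℝ) (h) : (sl2' p q r s h : Matrix (Fin 2) (Fin 2) ℝ) 1 1 = s := rfl

theorem sl2'_det (p q r s : ℝ) (h : p * s - q * r = 1) :
    (sl2' p q r s h : Matrix (Fin 2) (Fin 2) ℝ) 0 0 * (sl2' p q r s h : Matrix (Fin 2) (Fin 2) ℝ) 1 1
      - (sl2' p q r s h : Matrix (Fin 2) (Fin 2) ℝ) 0 1 * (sl2' p q r s h : Matrix (Fin 2) (Fin 2) ℝ) 1 0 = 1 := h

theorem sl_det_one (γ : Matrix.SpecialLinearGroup (Fin 2) ℝ) :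
    (γ : Matrix (Fin 2) (Fin 2) ℝ) 0 0 * (γ : Matrix (Fin 2) (Fin 2) ℝ) 1 1
      - (γ : Matrix (Fin 2) (Fin 2) ℝ) 0 1 * (γ : Matrix (Fin 2) (Fin 2) ℝ) 1 0 = 1 := by
  have := γ.2
  rwa [Matrix.det_fin_two] at this

/-- Reduction of a form with vanishing leading coefficient to the canonical form. -/
theorem bcf_reduce0 (b c d : ℝ) (h0 : bcfDisc ((0 : ℝ), b, c, d) ≠ 0) :
    ∃ γ : Matrix.SpecialLinearGroup (Fin 2) ℝ,
      bcfAct (γ : Matrix (Fin 2) (Fin 2) ℝ) ((0 : ℝ), b, c, d)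
        = (0, 1, 0, bcfDisc ((0 : ℝ), b, c, d) / 4) := by
  have hdisc : bcfDisc ((0 : ℝ), b, c, d) = -3 * b ^ 2 * c ^ 2 + 4 * b ^ 3 * d := by
    simp only [bcfDisc]; ring
  have hb : b ≠ 0 := by
    rintro rfl
    simp [hdisc] at h0
  have hdet : b⁻¹ * b - (-(c / 2)) * 0 = 1 := by field_simp; ring
  refine ⟨sl2' b⁻¹ (-(c / 2)) 0 b hdet, ?_⟩
  simp only [bcfAct, sl2'_00, sl2'_01, sl2'_10, sl2'_11, hdisc, Prod.mk.injEq]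
  refine ⟨by ring, by field_simp; ring, by field_simp; ring, by field_simp; ring⟩

/-- Reduction of any nondegenerate form to the canonical form `(0,1,0,D/4)`. -/
theorem bcf_reduce (f : BCF ℝ) (h0 : bcfDisc f ≠ 0) :
    ∃ γ : Matrix.SpecialLinearGroup (Fin 2) ℝ,
      bcfAct (γ : Matrix (Fin 2) (Fin 2) ℝ) f = (0, 1, 0, bcfDisc f / 4) := by
  obtain ⟨a, b, c, d⟩ := f
  by_cases ha : a = 0
  · subst ha; exact bcf_reduce0 b c d h0
  · -- first kill the leading coefficient using a real root of the cubic
    obtain ⟨t, ht⟩ := cubic_root' (3 * b / a) (3 * c / a) (d / a)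
    have hroot : a * t ^ 3 + 3 * b * t ^ 2 + 3 * c * t + d = 0 := by
      field_simp at ht
      linear_combination ht
    have hdet1 : t * 0 - (-1 : ℝ) * 1 = 1 := by ring
    set γ₁ := sl2' t (-1) 1 0 hdet1 with hγ₁
    set f₁ := bcfAct (γ₁ : Matrix (Fin 2) (Fin 2) ℝ) ((a : ℝ), b, c, d) with hf₁
    have hf₁0 : f₁.1 = 0 := by
      simp only [hf₁, hγ₁, bcfAct, sl2'_00, sl2'_01, sl2'_10, sl2'_11]
      linear_combination hroot
    have hdisc₁ : bcfDisc f₁ = bcfDisc ((a : ℝ), b, c, d) :=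
      bcfDisc_act' _ _ (sl2'_det _ _ _ _ _)
    have hf₁eq : f₁ = ((0 : ℝ), f₁.2.1, f₁.2.2.1, f₁.2.2.2) := by
      rw [← hf₁0]
    obtain ⟨γ₂, hγ₂⟩ := bcf_reduce0 f₁.2.1 f₁.2.2.1 f₁.2.2.2
      (by rw [← hf₁eq, hdisc₁]; exact h0)
    refine ⟨γ₁ * γ₂, ?_⟩
    rw [Matrix.SpecialLinearGroup.coe_mul, bcfAct_mul, ← hf₁, hf₁eq, hγ₂, ← hf₁eq, hdisc₁]

theorem SL2R_transitive_on_fixed_disc (D : ℝ) (hD : D ≠ 0) (f f' : BCF ℝ)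
    (hf : bcfDisc f = D) (hf' : bcfDisc f' = D) :
    ∃ γ : Matrix.SpecialLinearGroup (Fin 2) ℝ, bcfAct (γ : Matrix (Fin 2) (Fin 2) ℝ) f = f' := by
  have h0 : bcfDisc f ≠ 0 := hf ▸ hD
  have h0' : bcfDisc f' ≠ 0 := hf' ▸ hD
  obtain ⟨γ₁, hγ₁⟩ := bcf_reduce f h0
  obtain ⟨γ₂, hγ₂⟩ := bcf_reduce f' h0'
  refine ⟨γ₁ * γ₂⁻¹, ?_⟩
  rw [Matrix.SpecialLinearGroup.coe_mul, bcfAct_mul, hγ₁, hf, ← hf', ← hγ₂, ← bcfAct_mul,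
    ← Matrix.SpecialLinearGroup.coe_mul, mul_inv_cancel, Matrix.SpecialLinearGroup.coe_one,
    bcfAct_one]
end
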